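/- Let S be the left bilateral shift on ℓ²(ℤ) (the unitary operator determined by S e_n = e_{n−1} on the standard orthonormal basis {e_n}_{n∈ℤ}). Then the family of powers {S^k}_{k∈ℤ}, viewed as maps from the closed unit ball of ℓ²(ℤ) to itself, is NOT UEC for the weak uniformity. -/

import Mathlib

open scoped InnerProductSpace

/-- A family of maps `F k : H → H` (viewed as maps of the closed unit ball `H₁` to itself)
is *uniformly equicontinuous (UEC) for the weak uniformity* if for every `ε > 0` and all
vectors `x₁, …, x_N ∈ H₁` there exist `δ > 0` and vectors `w₁, …, w_M ∈ H₁` such that for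
all `ξ, η ∈ H₁` with `|⟪ξ - η, w_j⟫| < δ` for all `j`, and every member of the family,
`|⟪F k ξ - F k η, x_i⟫| < ε` for all `i`. -/
def UECweak {H : Type*} [NormedAddCommGroup H] [InnerProductSpace ℂ H]
    {ι : Type*} (F : ι → H → H) : Prop :=
  ∀ ε : ℝ, 0 < ε → ∀ (N : ℕ) (x : Fin N → H), (∀ i, ‖x i‖ ≤ 1) →
    ∃ (δ : ℝ) (M : ℕ) (w : Fin M → H), 0 < δ ∧ (∀ j, ‖w j‖ ≤ 1) ∧
      ∀ ξ η : H, ‖ξ‖ ≤ 1 → ‖η‖ ≤ 1 →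
        (∀ j, ‖⟪ξ - η, w j⟫_ℂ‖ < δ) →
        ∀ (k : ι) (i : Fin N), ‖⟪F k ξ - F k η, x i⟫_ℂ‖ < ε


theorem shift_pow_aux (S : unitary ((lp (fun _ : ℤ => ℂ) 2) →L[ℂ] (lp (fun _ : ℤ => ℂ) 2)))
    (hS : ∀ n : ℤ,
      (S : (lp (fun _ : ℤ => ℂ) 2) →L[ℂ] (lp (fun _ : ℤ => ℂ) 2)) (lp.single 2 n 1) =
        lp.single 2 (n - 1) 1) :
    ∀ m : ℕ, ∀ a : ℤ,
      ((S : (lp (fun _ : ℤ => ℂ) 2) →L[ℂ] (lp (fun _ : ℤ => ℂ) 2)) ^ m) (lp.single 2 a 1) =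
        (lp.single 2 (a - m) 1 : lp (fun _ : ℤ => ℂ) 2) := by
  intro m
  induction m with
  | zero => intro a; simp
  | succ m ih =>
    intro a
    rw [pow_succ', ContinuousLinearMap.mul_apply, ih, hS]
    congr 1
    push_cast
    ring

theorem small_exists (M : ℕ) (w : Fin M → lp (fun _ : ℤ => ℂ) 2) (δ : ℝ) (hδ : 0 < δ) :
    ∃ m : ℕ, ∀ j, ‖w j (m : ℤ)‖ < δ := by
  set δ' := min δ 1 with hδ'def
  have hδ' : 0 < δ' := lt_min hδ one_pos
  have hev : ∀ᶠ n : ℤ in Filter.cofinite, ∀ j, ‖w j n‖ < δ := by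
    rw [Filter.eventually_all]
    intro j
    have hsum : Summable fun n : ℤ => ‖w j n‖ ^ (2:ℝ) := by
      have := (lp.memℓp (w j)).summable (by norm_num)
      simpa using this
    have htend := hsum.tendsto_cofinite_zero
    have h2 : ∀ᶠ n : ℤ in Filter.cofinite, ‖w j n‖ ^ (2:ℝ) < δ' ^ (2:ℝ) :=
      htend.eventually_lt_const (Real.rpow_pos_of_pos hδ' _)
    refine h2.mono fun n hn => ?_
    by_contra hcon
    push_neg at hcon
    have hle : δ' ≤ ‖w j n‖ := le_trans (min_le_left _ _) hcon
    exact absurd (Real.rpow_le_rpow hδ'.le hle (by norm_num)) (not_le.2 hn)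
  have hmap : Filter.Tendsto (fun m : ℕ => (m : ℤ)) Filter.atTop Filter.cofinite := by
    refine Filter.Tendsto.mono_right tendsto_natCast_atTop_atTop ?_
    rw [Int.cofinite_eq]
    exact le_sup_right
  exact (hmap.eventually hev).exists


/-- Let `S` be the left bilateral shift on `ℓ²(ℤ)`, the unitary operator determined by
`S e_n = e_{n-1}` on the standard orthonormal basis `{e_n}_{n ∈ ℤ}`.  Then the family of
powers `{S^k}_{k ∈ ℤ}`, viewed as maps of the closed unit ball of `ℓ²(ℤ)` to itself, is
not UEC for the weak uniformity. -/
theorem not_uecWeak_bilateralShift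
    (S : unitary ((lp (fun _ : ℤ => ℂ) 2) →L[ℂ] (lp (fun _ : ℤ => ℂ) 2)))
    (hS : ∀ n : ℤ,
      (S : (lp (fun _ : ℤ => ℂ) 2) →L[ℂ] (lp (fun _ : ℤ => ℂ) 2)) (lp.single 2 n 1) =
        lp.single 2 (n - 1) 1) :
    ¬ UECweak (fun k : ℤ => fun x : lp (fun _ : ℤ => ℂ) 2 =>
        ((S ^ k : unitary _) : (lp (fun _ : ℤ => ℂ) 2) →L[ℂ] (lp (fun _ : ℤ => ℂ) 2)) x) := by
  intro h
  have hnorm : ∀ a : ℤ, ‖(lp.single 2 a (1:ℂ) : lp (fun _ : ℤ => ℂ) 2)‖ = 1 := by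
    intro a
    have := lp.norm_single (p := 2) (E := fun _ : ℤ => ℂ) (by norm_num) a (1:ℂ)
    simpa using this
  obtain ⟨δ, M, w, hδ, hw, hcond⟩ := h (1/2) (by norm_num) 1
    (fun _ => lp.single 2 (0:ℤ) 1) (fun i => (hnorm 0).le)
  obtain ⟨m, hm⟩ := small_exists M w δ hδ
  have hsmall : ∀ j, ‖⟪(lp.single 2 (m:ℤ) 1 : lp (fun _ : ℤ => ℂ) 2) - 0, w j⟫_ℂ‖ < δ := by
    intro j
    rw [sub_zero, lp.inner_single_left]
    simpa [RCLike.inner_apply] using hm j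
  have := hcond (lp.single 2 (m:ℤ) 1) 0 (by rw [hnorm]) (by simp) hsmall (m:ℤ) 0
  have happ : ((S ^ (m:ℤ) : unitary _) : (lp (fun _ : ℤ => ℂ) 2) →L[ℂ] _)
      (lp.single 2 (m:ℤ) 1) = (lp.single 2 (0:ℤ) 1 : lp (fun _ : ℤ => ℂ) 2) := by
    rw [zpow_natCast, SubmonoidClass.coe_pow, shift_pow_aux S hS]
    norm_num
  simp only [map_zero, sub_zero, happ, lp.inner_single_left] at this
  have h01 : (lp.single 2 (0:ℤ) (1:ℂ) : lp (fun _ : ℤ => ℂ) 2) (0:ℤ) = 1 := by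
    rw [lp.single_apply]; simp
  rw [h01] at this
  norm_num [RCLike.inner_apply] at this
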